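/- Let E_0 ⊆ … ⊆ E_k be sets of effects and let vis_i, ar_i, st_i (0 ≤ i ≤ k) be binary relations on effects such that each of the three families satisfies: the step-i relation is contained in E_i × E_i, and the step-(i+1) relation extends the step-i relation only by pairs whose second component lies in ε_i = E_{i+1} \ E_i (with ε_i disjoint from E_i). If the final triple (vis_k, ar_k, st_k) satisfies strict seriality Ψ_ser — i.e., Ψ_rc (∀ η1 η2 η3, st_k η1 η2 ∧ vis_k η1 η3 → vis_k η2 η3), Ψ_rr (∀ η1 η2 η3, st_k η1 η2 ∧ vis_k η3 η1 → vis_k η3 η2), and Ψ_lin (ar_k ⊆ vis_k) — then for every 0 ≤ i ≤ k the intermediate triple (vis_i, ar_i, st_i) satisfies Ψ_ser. -/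
import Mathlib


/-- Strict seriality `Ψ_ser`: the conjunction of read committed `Ψ_rc`,
repeatable read `Ψ_rr`, and linearizability `Ψ_lin`. -/
def strictlySerial {E : Type*} (vis ar st : E → E → Prop) : Prop :=
  (∀ η1 η2 η3, st η1 η2 → vis η1 η3 → vis η2 η3) ∧
  (∀ η1 η2 η3, st η1 η2 → vis η3 η1 → vis η3 η2) ∧
  (∀ η1 η2, ar η1 η2 → vis η1 η2)

/-- A family of relations `R i` (one per execution step) is a growing family
over the effect sets `Es i` up to step `k`: each `R i` is contained in
`Es i × Es i`, and `R (i+1)` extends `R i` only by pairs whose second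
component is one of the fresh effects in `Es (i+1) \ Es i`. -/
def growingFamily {E : Type*} (k : ℕ) (Es : ℕ → Set E) (R : ℕ → E → E → Prop) : Prop :=
  (∀ i ≤ k, ∀ η η', R i η η' → η ∈ Es i ∧ η' ∈ Es i) ∧
  (∀ i < k, ∀ η η', R i η η' → R (i + 1) η η') ∧
  (∀ i < k, ∀ η η', R (i + 1) η η' → R i η η' ∨ η' ∈ Es (i + 1) \ Es i)

private lemma Es_mono {E : Type*} (k : ℕ) (Es : ℕ → Set E)
    (hEmono : ∀ i < k, Es i ⊆ Es (i + 1)) :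
    ∀ i j, i ≤ j → j ≤ k → Es i ⊆ Es j := by
  intro i j hij hjk
  induction j, hij using Nat.le_induction with
  | base => exact le_refl _
  | succ j hij ih =>
    exact (ih (le_of_lt (Nat.lt_of_lt_of_le (Nat.lt_succ_self j) hjk))).trans
      (hEmono j (Nat.lt_of_lt_of_le (Nat.lt_succ_self j) hjk))

private lemma gf_up {E : Type*} (k : ℕ) (Es : ℕ → Set E) (R : ℕ → E → E → Prop)
    (h : growingFamily k Es R) :
    ∀ i j, i ≤ j → j ≤ k → ∀ η η', R i η η' → R j η η' := by
  intro i j hij hjk η η' hR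
  induction j, hij using Nat.le_induction with
  | base => exact hR
  | succ j hij ih =>
    have hjk' : j < k := Nat.lt_of_lt_of_le (Nat.lt_succ_self j) hjk
    exact h.2.1 j hjk' η η' (ih hjk'.le)

private lemma gf_down {E : Type*} (k : ℕ) (Es : ℕ → Set E) (R : ℕ → E → E → Prop)
    (hEmono : ∀ i < k, Es i ⊆ Es (i + 1))
    (h : growingFamily k Es R) :
    ∀ i j, i ≤ j → j ≤ k → ∀ η η', R j η η' → η' ∈ Es i → R i η η' := by
  intro i j hij hjk η η' hR hmem
  induction j, hij using Nat.le_induction with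
  | base => exact hR
  | succ j hij ih =>
    have hjk' : j < k := Nat.lt_of_lt_of_le (Nat.lt_succ_self j) hjk
    rcases h.2.2 j hjk' η η' hR with hRj | hfresh
    · exact ih hjk'.le hRj
    · exact absurd (Es_mono k Es hEmono i j hij hjk'.le hmem) hfresh.2

/-- If the final system state of an execution satisfies strict seriality,
then so does every intermediate system state. -/
theorem strictlySerial_of_final {E : Type*} (k : ℕ) (Es : ℕ → Set E)
    (vis ar st : ℕ → E → E → Prop)
    (hEmono : ∀ i < k, Es i ⊆ Es (i + 1))
    (hdisj : ∀ i < k, Disjoint (Es (i + 1) \ Es i) (Es i))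
    (hvis : growingFamily k Es vis)
    (har : growingFamily k Es ar)
    (hst : growingFamily k Es st)
    (hser : strictlySerial (vis k) (ar k) (st k)) :
    ∀ i ≤ k, strictlySerial (vis i) (ar i) (st i) := by
  intro i hik
  obtain ⟨hrc, hrr, hlin⟩ := hser
  refine ⟨?_, ?_, ?_⟩
  · intro η1 η2 η3 h12 h13
    have hk := hrc η1 η2 η3 (gf_up k Es st hst i k hik le_rfl _ _ h12)
      (gf_up k Es vis hvis i k hik le_rfl _ _ h13)
    exact gf_down k Es vis hEmono hvis i k hik le_rfl _ _ hk
      ((hvis.1 i hik _ _ h13).2)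
  · intro η1 η2 η3 h12 h31
    have hk := hrr η1 η2 η3 (gf_up k Es st hst i k hik le_rfl _ _ h12)
      (gf_up k Es vis hvis i k hik le_rfl _ _ h31)
    exact gf_down k Es vis hEmono hvis i k hik le_rfl _ _ hk
      ((hst.1 i hik _ _ h12).2)
  · intro η1 η2 h12
    have hk := hlin η1 η2 (gf_up k Es ar har i k hik le_rfl _ _ h12)
    exact gf_down k Es vis hEmono hvis i k hik le_rfl _ _ hk
      ((har.1 i hik _ _ h12).2)
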